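/- Let p ≥ 1 and let Q ⊆ {0,1}^p be a nonempty finite set of 0–1 vectors, viewed as a subset of ℝ^p, and let Q⁰ = Q \ {0}. Then there exists a finite set F ⊆ ℝ^p such that conv(Q⁰) = conv(Q) ∩ ⋂_{π ∈ F} {z ∈ ℝ^p : π᜔ᵀz ≥ 1}, i.e., the convex hull of Q⁰ equals the intersection of the convex hull of Q with finitely many half-spaces of the form π^⊤ z ≥ 1. -/

import Mathlib

open scoped RealInnerProductSpace
open Filter

set_option linter.unusedSectionVars false

variable {E : Type*} [NormedAddCommGroup E] [InnerProductSpace ℝ E] [FiniteDimensional ℝ E]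

/-- halfspace lemma -/
lemma inner_ge_of_mem_convexHull {A : Set E} {π u : E} {c : ℝ}
    (hu : u ∈ convexHull ℝ A) (h : ∀ q ∈ A, c ≤ ⟪π, q⟫) : c ≤ ⟪π, u⟫ := by
  have hcv : Convex ℝ {z : E | c ≤ ⟪π, z⟫} :=
    convex_halfSpace_ge (IsLinearMap.mk (fun x y => inner_add_right π x y)
      (fun r x => real_inner_smul_right π x r)) c
  exact convexHull_min h hcv hu

lemma proj_inner_eq (V : Submodule ℝ E) (x : E) {v : E} (hv : v ∈ V) :
    ⟪(V.orthogonalProjectionOnto x : E), v⟫ = ⟪x, v⟫ := by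
  have h : x - (V.orthogonalProjectionOnto x : E) ∈ Vᗮ := Submodule.sub_starProjection_mem_orthogonal (K := V) x
  have h2 : ⟪v, x - V.orthogonalProjectionOnto x⟫ = 0 := (Submodule.mem_orthogonal V _).1 h v hv
  rw [inner_sub_right] at h2
  linarith [h2, real_inner_comm v x, real_inner_comm v ((V.orthogonalProjectionOnto x : E))]

lemma sep_step {A : Set E} (hA : A.Finite) {u : E}
    (hu : u ∈ convexHull ℝ A) (h : ∀ s : ℝ, 0 ≤ s → s < 1 → s • u ∉ convexHull ℝ A)
    {ε : ℝ} (hε0 : 0 < ε) (hε1 : ε < 1) :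
    ∃ π : E, π ∈ Submodule.span ℝ A ∧ (∀ q ∈ A, 1 ≤ ⟪π, q⟫) ∧ ⟪π, u⟫ < (1 - ε)⁻¹ := by
  have h1ε : (0:ℝ) < 1 - ε := by linarith
  have hKcv : Convex ℝ (convexHull ℝ A) := convex_convexHull ℝ A
  have hKcp : IsCompact (convexHull ℝ A) := hA.isCompact_convexHull ℝ
  have hScv : Convex ℝ (segment ℝ (0:E) ((1-ε) • u)) := convex_segment _ _
  have hScp : IsCompact (segment ℝ (0:E) ((1-ε) • u)) := by
    rw [segment_eq_image]
    exact isCompact_Icc.image (by fun_prop)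
  have hdisj : Disjoint (segment ℝ (0:E) ((1-ε) • u)) (convexHull ℝ A) := by
    rw [Set.disjoint_left]
    intro x hx
    rw [segment_eq_image] at hx
    obtain ⟨θ, hθ, rfl⟩ := hx
    simp only [smul_zero, zero_add, smul_smul]
    refine h _ (by nlinarith [hθ.1, hθ.2]) ?_
    nlinarith [hθ.1, hθ.2]
  obtain ⟨f, c₁, c₂, hf1, hc, hf2⟩ :=
    geometric_hahn_banach_compact_closed hScv hScp hKcv hKcp.isClosed hdisj
  have hc₁ : 0 < c₁ := by
    have := hf1 0 (left_mem_segment ℝ _ _)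
    simpa using this
  have hc₂ : 0 < c₂ := lt_trans hc₁ hc
  set π1 : E := c₂⁻¹ • (InnerProductSpace.toDual ℝ E).symm f with hπ1
  have hπ1inner : ∀ z : E, ⟪π1, z⟫ = c₂⁻¹ * f z := by
    intro z
    rw [hπ1, real_inner_smul_left, InnerProductSpace.toDual_symm_apply]
  have huspan : u ∈ Submodule.span ℝ A :=
    convexHull_min Submodule.subset_span (Submodule.span ℝ A).convex hu
  refine ⟨(Submodule.span ℝ A).orthogonalProjectionOnto π1, Submodule.coe_mem _, ?_, ?_⟩
  · intro q hq
    rw [proj_inner_eq _ _ (Submodule.subset_span hq), hπ1inner]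
    have hq2 := hf2 q (subset_convexHull ℝ A hq)
    have h4 := mul_le_mul_of_nonneg_left hq2.le (inv_nonneg.2 hc₂.le)
    have h5 : c₂⁻¹ * c₂ = 1 := inv_mul_cancel₀ (ne_of_gt hc₂)
    linarith
  · rw [proj_inner_eq _ _ huspan, hπ1inner]
    have h3 := hf1 ((1-ε) • u) (right_mem_segment ℝ _ _)
    rw [map_smul, smul_eq_mul] at h3
    have h6 : f u < c₂ / (1 - ε) := by rw [lt_div_iff₀ h1ε]; nlinarith
    have h7 := mul_lt_mul_of_pos_left h6 (inv_pos.2 hc₂)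
    have h8 : c₂⁻¹ * (c₂ / (1 - ε)) = (1-ε)⁻¹ := by field_simp
    linarith

lemma exists_dual_opt (A : Finset E) : ∀ u : E,
    u ∈ convexHull ℝ (A : Set E) →
    (∀ s : ℝ, 0 ≤ s → s < 1 → s • u ∉ convexHull ℝ (A : Set E)) →
    ∃ π : E, (∀ q ∈ A, 1 ≤ ⟪π, q⟫) ∧ ⟪π, u⟫ = 1 := by
  classical
  induction A using Finset.strongInduction with
  | _ A ih =>
  intro u hu h
  have hsep : ∀ n : ℕ, ∃ π : E, π ∈ Submodule.span ℝ (A : Set E) ∧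
      (∀ q ∈ A, 1 ≤ ⟪π, q⟫) ∧ ⟪π, u⟫ < (1 - (1:ℝ)/(n+2))⁻¹ := by
    intro n
    have hpos : (0:ℝ) < 1/(n+2) := by positivity
    have hlt1 : (1:ℝ)/(n+2) < 1 := by
      rw [div_lt_one (by positivity)]
      linarith [Nat.cast_nonneg (α := ℝ) n]
    exact sep_step A.finite_toSet hu h hpos hlt1
  choose π hπspan hπge hπlt using hsep
  have hble : ∀ n : ℕ, ⟪π n, u⟫ < 1 + 1/((n:ℝ)+1) := by
    intro n
    have h3 : ((n:ℝ)+1) ≠ 0 := by positivity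
    have h4 : ((n:ℝ)+2) ≠ 0 := by positivity
    have h5 : (1 + 1/((n:ℝ)+1)) * (1 - (1:ℝ)/((n:ℝ)+2)) = 1 := by
      field_simp
      ring
    have h2 : (1 - (1:ℝ)/((n:ℝ)+2))⁻¹ = 1 + 1/((n:ℝ)+1) :=
      (eq_inv_of_mul_eq_one_left h5).symm
    have := hπlt n
    rw [h2] at this
    exact this
  have bge1 : ∀ n, 1 ≤ ⟪π n, u⟫ := fun n => inner_ge_of_mem_convexHull hu (hπge n)
  have blt2 : ∀ n, ⟪π n, u⟫ < 2 := by
    intro n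
    have h5 : (1:ℝ)/((n:ℝ)+1) ≤ 1 := by
      rw [div_le_one (by positivity)]
      linarith [Nat.cast_nonneg (α := ℝ) n]
    linarith [hble n]
  have hlim1 : Tendsto (fun k : ℕ => 1 + 1/((k:ℝ)+1)) atTop (nhds 1) := by
    simpa using tendsto_const_nhds.add (tendsto_one_div_add_atTop_nhds_zero_nat (𝕜 := ℝ))
  by_cases hb : ∃ R : ℝ, ∀ N : ℕ, ∃ n ≥ N, ‖π n‖ ≤ R
  · obtain ⟨R, hR⟩ := hb
    have hfreq : ∃ᶠ n in atTop, ‖π n‖ ≤ R := Filter.frequently_atTop.2 hR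
    obtain ⟨g, hg, hgR⟩ := Filter.extraction_of_frequently_atTop hfreq
    have hclosed : IsClosed ((Submodule.span ℝ (A : Set E) : Set E)) :=
      Submodule.closed_of_finiteDimensional _
    have hcpt : IsCompact ((Submodule.span ℝ (A:Set E) : Set E) ∩ Metric.closedBall 0 R) :=
      (isCompact_closedBall (0:E) R).inter_left hclosed
    have hmem : ∀ k, π (g k) ∈ (Submodule.span ℝ (A:Set E) : Set E) ∩ Metric.closedBall 0 R :=
      fun k => ⟨hπspan _, mem_closedBall_zero_iff.2 (hgR k)⟩
    obtain ⟨piL, hpiLmem, g2, hg2, hconv⟩ := hcpt.tendsto_subseq hmem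
    have hconv' : Tendsto (fun k => π (g (g2 k))) atTop (nhds piL) := hconv
    have hinner : ∀ q : E, Tendsto (fun k => ⟪π (g (g2 k)), q⟫) atTop (nhds ⟪piL, q⟫) :=
      fun q => hconv'.inner tendsto_const_nhds
    have hge : ∀ q ∈ A, 1 ≤ ⟪piL, q⟫ := fun q hq =>
      ge_of_tendsto (hinner q) (Filter.Eventually.of_forall fun k => hπge _ q hq)
    refine ⟨piL, hge, le_antisymm ?_ (inner_ge_of_mem_convexHull hu hge)⟩
    have hbd : ∀ k : ℕ, ⟪π (g (g2 k)), u⟫ ≤ 1 + 1/((k:ℝ)+1) := by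
      intro k
      have hmk : k ≤ g (g2 k) := le_trans hg2.le_apply hg.le_apply
      have hmono : 1/((g (g2 k):ℝ)+1) ≤ 1/((k:ℝ)+1) := by
        have hk : (k:ℝ) ≤ (g (g2 k) : ℝ) := by exact_mod_cast hmk
        gcongr <;> linarith
      linarith [hble (g (g2 k))]
    exact le_of_tendsto_of_tendsto' (hinner u) hlim1 hbd
  · push_neg at hb
    have htop : Tendsto (fun n => ‖π n‖) atTop atTop := by
      rw [Filter.tendsto_atTop]
      intro R
      obtain ⟨N, hN⟩ := hb R
      exact Filter.eventually_atTop.2 ⟨N, fun n hn => (hN n hn).le⟩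
    have hev : ∀ n : ℕ, ∀ᶠ k in atTop, ((n:ℝ)+1) ≤ ‖π k‖ := fun n =>
      htop.eventually_ge_atTop _
    obtain ⟨g, hg, hgnorm⟩ := Filter.extraction_forall_of_eventually hev
    have hrpos : ∀ n, 0 < ‖π (g n)‖ := fun n => lt_of_lt_of_le (by positivity) (hgnorm n)
    set χ : ℕ → E := fun n => ‖π (g n)‖⁻¹ • π (g n) with hχ
    have hχmem : ∀ n, χ n ∈ (Submodule.span ℝ (A:Set E) : Set E) ∩ Metric.sphere 0 1 := by
      intro n
      refine ⟨Submodule.smul_mem _ _ (hπspan _), ?_⟩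
      rw [mem_sphere_zero_iff_norm, hχ]
      rw [norm_smul, norm_inv, norm_norm]
      exact inv_mul_cancel₀ (hrpos n).ne'
    have hcpt : IsCompact ((Submodule.span ℝ (A:Set E) : Set E) ∩ Metric.sphere 0 1) :=
      (isCompact_sphere (0:E) 1).inter_left (Submodule.closed_of_finiteDimensional _)
    obtain ⟨φ, hφmem, g2, hg2, hconv⟩ := hcpt.tendsto_subseq hχmem
    have hconv' : Tendsto (fun k => χ (g2 k)) atTop (nhds φ) := hconv
    have hinner : ∀ q : E, Tendsto (fun k => ⟪χ (g2 k), q⟫) atTop (nhds ⟪φ, q⟫) :=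
      fun q => hconv'.inner tendsto_const_nhds
    have hφspan : φ ∈ Submodule.span ℝ (A:Set E) := hφmem.1
    have hφnorm : ‖φ‖ = 1 := mem_sphere_zero_iff_norm.1 hφmem.2
    have hχq : ∀ n, ∀ q ∈ A, 0 ≤ ⟪χ n, q⟫ := by
      intro n q hq
      rw [hχ, real_inner_smul_left]
      exact mul_nonneg (inv_nonneg.2 (hrpos n).le)
        (le_trans zero_le_one (hπge _ q hq))
    have hφq : ∀ q ∈ A, 0 ≤ ⟪φ, q⟫ := fun q hq =>
      ge_of_tendsto (hinner q) (Filter.Eventually.of_forall fun k => hχq _ q hq)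
    have hlim0 : Tendsto (fun k : ℕ => 2 * (1/((k:ℝ)+1))) atTop (nhds 0) := by
      simpa using (tendsto_one_div_add_atTop_nhds_zero_nat (𝕜 := ℝ)).const_mul 2
    have hφu_le : ⟪φ, u⟫ ≤ 0 := by
      refine le_of_tendsto_of_tendsto' (hinner u) hlim0 ?_
      intro k
      rw [hχ, real_inner_smul_left]
      have h1 : ((g2 k : ℝ)+1) ≤ ‖π (g (g2 k))‖ := hgnorm (g2 k)
      have h2 : ((k:ℝ)+1) ≤ ‖π (g (g2 k))‖ := by
        have hk : (k:ℝ) ≤ (g2 k : ℝ) := by exact_mod_cast hg2.le_apply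
        linarith
      have h3 : ‖π (g (g2 k))‖⁻¹ ≤ 1/((k:ℝ)+1) := by
        rw [inv_le_comm₀ (hrpos _) (by positivity)]
        simpa using h2
      have h4 : 0 ≤ ⟪π (g (g2 k)), u⟫ := le_trans zero_le_one (bge1 _)
      have h5 : ⟪π (g (g2 k)), u⟫ ≤ 2 := (blt2 _).le
      calc ‖π (g (g2 k))‖⁻¹ * ⟪π (g (g2 k)), u⟫
          ≤ (1/((k:ℝ)+1)) * 2 := by
            apply mul_le_mul h3 h5 h4 (by positivity)
        _ = 2 * (1/((k:ℝ)+1)) := by ring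
    have hφu : ⟪φ, u⟫ = 0 := le_antisymm hφu_le (inner_ge_of_mem_convexHull hu hφq)
    have hexq : ∃ q ∈ A, 0 < ⟪φ, q⟫ := by
      by_contra hcon
      push_neg at hcon
      have hz : ∀ q ∈ (A:Set E), ⟪φ, (q:E)⟫ = 0 := fun q hq =>
        le_antisymm (hcon q hq) (hφq q hq)
      have hz2 : ∀ v ∈ Submodule.span ℝ (A:Set E), ⟪φ, v⟫ = 0 := by
        intro v hv
        induction hv using Submodule.span_induction with
        | mem x hx => exact hz x hx
        | zero => exact inner_zero_right φ
        | add x y hx hy ihx ihy => rw [inner_add_right, ihx, ihy]; ring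
        | smul c x hx ihx => rw [real_inner_smul_right, ihx]; ring
      have h6 : ⟪φ, φ⟫ = 0 := hz2 φ hφspan
      rw [inner_self_eq_zero] at h6
      rw [h6] at hφnorm
      simp at hφnorm
    -- weights
    have hu' := hu
    rw [Finset.convexHull_eq] at hu'
    obtain ⟨w, hw0, hw1, hwc⟩ := hu'
    have husum : ∑ q ∈ A, w q • q = u := by
      rw [← hwc]
      exact (Finset.centerMass_eq_of_sum_1 _ id hw1).symm
    have hinner0 : ∑ q ∈ A, w q * ⟪φ, q⟫ = 0 := by
      rw [← hφu, ← husum, inner_sum]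
      exact Finset.sum_congr rfl fun q hq => (real_inner_smul_right φ q (w q)).symm
    have hsupp : ∀ q ∈ A, ⟪φ, q⟫ ≠ 0 → w q = 0 := by
      intro q hq hne
      have hterm := (Finset.sum_eq_zero_iff_of_nonneg
        (fun q hq => mul_nonneg (hw0 q hq) (hφq q hq))).1 hinner0 q hq
      rcases mul_eq_zero.1 hterm with h' | h'
      · exact h'
      · exact absurd h' hne
    set A₀ : Finset E := A.filter (fun q => ⟪φ, q⟫ = 0) with hA₀
    have hA₀ss : A₀ ⊂ A := by
      obtain ⟨q, hq, hqpos⟩ := hexq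
      exact Finset.filter_ssubset.2 ⟨q, hq, by intro h'; exact absurd h' hqpos.ne'⟩
    have hwz : ∀ q ∈ A, q ∉ A₀ → w q = 0 := by
      intro q hq hnq
      refine hsupp q hq ?_
      intro h'
      exact hnq (Finset.mem_filter.2 ⟨hq, h'⟩)
    have hu0 : u ∈ convexHull ℝ (A₀ : Set E) := by
      rw [Finset.convexHull_eq]
      refine ⟨w, fun q hq => hw0 q (Finset.filter_subset _ _ hq), ?_, ?_⟩
      · rw [Finset.sum_subset (Finset.filter_subset _ _) hwz]
        exact hw1
      · rw [Finset.centerMass_subset id (Finset.filter_subset _ _) hwz]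
        exact hwc
    have hsm : ∀ s : ℝ, 0 ≤ s → s < 1 → s • u ∉ convexHull ℝ (A₀ : Set E) := by
      intro s h1 h2 hmem
      exact h s h1 h2 (convexHull_mono (Finset.coe_subset.2 (Finset.filter_subset _ _)) hmem)
    obtain ⟨π₀, hπ₀ge, hπ₀u⟩ := ih A₀ hA₀ss u hu0 hsm
    have hAne : A.Nonempty := ⟨hexq.choose, hexq.choose_spec.1⟩
    set M : ℝ := max (A.sup' hAne fun q => (1 - ⟪π₀, q⟫) / ⟪φ, q⟫) 0 with hM
    refine ⟨π₀ + M • φ, ?_, ?_⟩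
    · intro q hq
      rw [inner_add_left, real_inner_smul_left]
      by_cases hq0 : ⟪φ, q⟫ = 0
      · rw [hq0]
        have := hπ₀ge q (Finset.mem_filter.2 ⟨hq, hq0⟩)
        linarith
      · have hqpos : 0 < ⟪φ, q⟫ := lt_of_le_of_ne (hφq q hq) (Ne.symm hq0)
        have hMle : (1 - ⟪π₀, q⟫) / ⟪φ, q⟫ ≤ M :=
          le_max_of_le_left (Finset.le_sup' (f := fun q => (1 - ⟪π₀, q⟫) / ⟪φ, q⟫) hq)
        have := (div_le_iff₀ hqpos).1 hMle
        linarith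
    · rw [inner_add_left, real_inner_smul_left, hφu, hπ₀u]
      ring

section Statement0

/-- For a nonempty finite set `Q ⊆ {0,1}^p` (viewed in ℝ^p) with `Q⁰ = Q \ {0}`,
there is a finite set `F ⊆ ℝ^p` with
`conv(Q⁰) = conv(Q) ∩ ⋂_{π ∈ F} {z : πᵀz ≥ 1}`. -/
theorem statement0_euc (p : ℕ) (hp : 1 ≤ p) (Q : Set (EuclideanSpace ℝ (Fin p)))
    (hQbin : Q ⊆ {z | ∀ i, z i = 0 ∨ z i = 1})
    (hQne : Q.Nonempty) (hQfin : Q.Finite) :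
    ∃ F : Finset (EuclideanSpace ℝ (Fin p)),
      convexHull ℝ (Q \ {0}) =
        convexHull ℝ Q ∩ ⋂ π ∈ F, {z : EuclideanSpace ℝ (Fin p) | 1 ≤ ∑ i, π i * z i} := by
  classical
  by_cases h0 : (0 : EuclideanSpace ℝ (Fin p)) ∈ Q
  swap
  · refine ⟨∅, ?_⟩
    simp [Set.diff_singleton_eq_self h0]
  by_cases hQ0 : Q \ {0} = ∅
  · refine ⟨{(0 : EuclideanSpace ℝ (Fin p))}, ?_⟩
    rw [hQ0]
    apply subset_antisymm
    · simp
    · rintro z ⟨-, hz2⟩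
      have := Set.mem_iInter₂.1 hz2 0 (Finset.mem_singleton_self _)
      simp at this
      exact absurd this (by norm_num)
  -- main case
  have hQ0fin : (Q \ {0}).Finite := hQfin.subset Set.diff_subset
  let A : Finset (EuclideanSpace ℝ (Fin p)) := hQ0fin.toFinset
  have hAQ0 : (A : Set (EuclideanSpace ℝ (Fin p))) = Q \ {0} := hQ0fin.coe_toFinset
  have hhs : ∀ π : (EuclideanSpace ℝ (Fin p)), {z : EuclideanSpace ℝ (Fin p) | 1 ≤ ∑ i, π i * z i} = {z : (EuclideanSpace ℝ (Fin p)) | 1 ≤ ⟪π, z⟫} := by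
    intro π
    ext z
    simp only [Set.mem_setOf_eq, PiLp.inner_apply, Real.inner_apply]
  -- 0 not in hull of A
  have hζ : ∃ ζ : EuclideanSpace ℝ (Fin p), ∀ i, ζ i = 1 := ⟨WithLp.toLp 2 (fun _ => (1:ℝ)), fun _ => rfl⟩
  obtain ⟨ζ, hζ1⟩ := hζ
  have hones : ∀ q ∈ (A : Set (EuclideanSpace ℝ (Fin p))), 1 ≤ ⟪ζ, q⟫ := by
    intro q hq
    rw [hAQ0] at hq
    obtain ⟨hqQ, hqne⟩ := hq
    obtain ⟨i, hi⟩ : ∃ i, q i ≠ 0 := by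
      by_contra hcon
      push_neg at hcon
      exact hqne (by ext i; exact hcon i)
    have hqi : q i = 1 := (hQbin hqQ i).resolve_left hi
    have hnn : ∀ j, 0 ≤ q j := by
      intro j
      rcases hQbin hqQ j with h' | h' <;> rw [h'] <;> norm_num
    have hsum : 1 ≤ ∑ j, q j := by
      rw [← hqi]
      exact Finset.single_le_sum (fun j _ => hnn j) (Finset.mem_univ i)
    calc (1:ℝ) ≤ ∑ j, q j := hsum
      _ = ⟪ζ, q⟫ := by simp [PiLp.inner_apply, hζ1]
  have h0K : (0:(EuclideanSpace ℝ (Fin p))) ∉ convexHull ℝ (A : Set (EuclideanSpace ℝ (Fin p))) := by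
    intro hmem
    have := inner_ge_of_mem_convexHull hmem hones
    rw [inner_zero_right] at this
    norm_num at this
  -- choice function
  have hch : ∀ T : Finset (EuclideanSpace ℝ (Fin p)), ∃ π : (EuclideanSpace ℝ (Fin p)),
      (∃ π' : (EuclideanSpace ℝ (Fin p)), (∀ q ∈ A, 1 ≤ ⟪π', q⟫) ∧ (∀ q ∈ T, ⟪π', q⟫ = 1)) →
      ((∀ q ∈ A, 1 ≤ ⟪π, q⟫) ∧ (∀ q ∈ T, ⟪π, q⟫ = 1)) := by
    intro T
    by_cases hT : ∃ π' : (EuclideanSpace ℝ (Fin p)), (∀ q ∈ A, 1 ≤ ⟪π', q⟫) ∧ (∀ q ∈ T, ⟪π', q⟫ = 1)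
    · obtain ⟨π', h1, h2⟩ := hT
      exact ⟨π', fun _ => ⟨h1, h2⟩⟩
    · exact ⟨0, fun h' => absurd h' hT⟩
  choose f hf using hch
  set F' : Finset (EuclideanSpace ℝ (Fin p)) := (A.powerset.filter
    (fun T => ∃ π' : (EuclideanSpace ℝ (Fin p)), (∀ q ∈ A, 1 ≤ ⟪π', q⟫) ∧ (∀ q ∈ T, ⟪π', q⟫ = 1))).image f with hF'
  refine ⟨F', ?_⟩
  have key2 : convexHull ℝ (E := (EuclideanSpace ℝ (Fin p))) (Q \ {0}) =
      convexHull ℝ (E := (EuclideanSpace ℝ (Fin p))) Q ∩ ⋂ π ∈ F', {z : EuclideanSpace ℝ (Fin p) | 1 ≤ ∑ i, π i * z i} := by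
    have hQins : insert (0:(EuclideanSpace ℝ (Fin p))) (A : Set (EuclideanSpace ℝ (Fin p))) = Q := by
      rw [hAQ0, Set.insert_diff_singleton]
      exact Set.insert_eq_self.2 h0
    apply subset_antisymm
    · intro z hz
      have hzK : z ∈ convexHull ℝ (A : Set (EuclideanSpace ℝ (Fin p))) := by rw [hAQ0]; exact hz
      refine ⟨convexHull_mono Set.diff_subset hz, ?_⟩
      rw [Set.mem_iInter₂]
      intro π hπF
      obtain ⟨T, hT, rfl⟩ := Finset.mem_image.1 hπF
      have hPT := (Finset.mem_filter.1 hT).2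
      have hprop := hf T hPT
      rw [hhs]
      exact inner_ge_of_mem_convexHull hzK hprop.1
    · rintro z ⟨hzQ, hzF⟩
      have hAne : (A : Set (EuclideanSpace ℝ (Fin p))).Nonempty := by
        rw [hAQ0]
        exact Set.nonempty_iff_ne_empty.2 hQ0
      rw [← hQins, convexHull_insert hAne, mem_convexJoin] at hzQ
      obtain ⟨a, ha, w, hwK, hseg⟩ := hzQ
      rw [Set.mem_singleton_iff] at ha
      subst ha
      rw [segment_eq_image] at hseg
      obtain ⟨θ, hθ, rfl⟩ := hseg
      simp only [smul_zero, zero_add]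
      have hzmem : θ • w ∈ convexHull ℝ (A : Set (EuclideanSpace ℝ (Fin p))) → θ • w ∈ convexHull ℝ (E := (EuclideanSpace ℝ (Fin p))) (Q \ {0}) := by
        intro h'
        rwa [hAQ0] at h'
      -- scaling set
      set S : Set ℝ := Set.Icc (0:ℝ) 1 ∩ (fun s : ℝ => s • w) ⁻¹' (convexHull ℝ (A : Set (EuclideanSpace ℝ (Fin p)))) with hS
      have hScl : IsClosed S := by
        apply IsClosed.inter isClosed_Icc
        apply IsClosed.preimage (by fun_prop)
        exact (A.finite_toSet.isCompact_convexHull ℝ).isClosed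
      have hSne : S.Nonempty := ⟨1, ⟨by norm_num, by simpa using hwK⟩⟩
      have hSbdd : BddBelow S := ⟨0, fun s hs => hs.1.1⟩
      set t₁ : ℝ := sInf S with ht₁
      have ht₁S : t₁ ∈ S := hScl.csInf_mem hSne hSbdd
      have ht₁0 : 0 ≤ t₁ := ht₁S.1.1
      have ht₁1 : t₁ ≤ 1 := ht₁S.1.2
      have huK : t₁ • w ∈ convexHull ℝ (A : Set (EuclideanSpace ℝ (Fin p))) := ht₁S.2
      have ht₁pos : 0 < t₁ := by
        rcases lt_or_eq_of_le ht₁0 with h' | h'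
        · exact h'
        · exfalso
          apply h0K
          rw [← h'] at huK
          rwa [zero_smul] at huK
      have hup : ∀ s : ℝ, 0 ≤ s → s < 1 → s • (t₁ • w) ∉ convexHull ℝ (A : Set (EuclideanSpace ℝ (Fin p))) := by
        intro s hs0 hs1 hmem
        rw [smul_smul] at hmem
        have hmemS : s * t₁ ∈ S := by
          refine ⟨⟨mul_nonneg hs0 ht₁0, ?_⟩, hmem⟩
          calc s * t₁ ≤ 1 * 1 := by
                apply mul_le_mul hs1.le ht₁1 ht₁0 (by norm_num)
            _ = 1 := by norm_num
        have := csInf_le hSbdd hmemS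
        nlinarith
      obtain ⟨πs, hπsge, hπsu⟩ := exists_dual_opt A (t₁ • w) huK hup
      -- tight set
      set T : Finset (EuclideanSpace ℝ (Fin p)) := A.filter (fun q => ⟪πs, q⟫ = 1) with hT
      have hPT : ∃ π' : (EuclideanSpace ℝ (Fin p)), (∀ q ∈ A, 1 ≤ ⟪π', q⟫) ∧ (∀ q ∈ T, ⟪π', q⟫ = 1) :=
        ⟨πs, hπsge, fun q hq => (Finset.mem_filter.1 hq).2⟩
      have hTmem : T ∈ A.powerset.filter
          (fun T => ∃ π' : (EuclideanSpace ℝ (Fin p)), (∀ q ∈ A, 1 ≤ ⟪π', q⟫) ∧ (∀ q ∈ T, ⟪π', q⟫ = 1)) :=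
        Finset.mem_filter.2 ⟨Finset.mem_powerset.2 (Finset.filter_subset _ _), hPT⟩
      have hπTF : f T ∈ F' := Finset.mem_image_of_mem f hTmem
      obtain ⟨hπTge, hπTeq⟩ := hf T hPT
      -- u in conv T
      have huK' := huK
      rw [Finset.convexHull_eq] at huK'
      obtain ⟨wt, hwt0, hwt1, hwtc⟩ := huK'
      have husum : ∑ q ∈ A, wt q • q = t₁ • w := by
        rw [← hwtc]
        exact (Finset.centerMass_eq_of_sum_1 _ id hwt1).symm
      have hsum1 : ∑ q ∈ A, wt q * ⟪πs, q⟫ = 1 := by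
        rw [← hπsu, ← husum, inner_sum]
        exact Finset.sum_congr rfl fun q hq => (real_inner_smul_right πs q (wt q)).symm
      have hsum0 : ∑ q ∈ A, wt q * (⟪πs, q⟫ - 1) = 0 := by
        have : ∑ q ∈ A, wt q * (⟪πs, q⟫ - 1) = (∑ q ∈ A, wt q * ⟪πs, q⟫) - ∑ q ∈ A, wt q := by
          rw [← Finset.sum_sub_distrib]
          exact Finset.sum_congr rfl fun q hq => by ring
        rw [this, hsum1, hwt1]
        ring
      have hwz : ∀ q ∈ A, q ∉ T → wt q = 0 := by
        intro q hq hnq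
        have hne1 : ⟪πs, q⟫ ≠ 1 := fun h' => hnq (Finset.mem_filter.2 ⟨hq, h'⟩)
        have hterm := (Finset.sum_eq_zero_iff_of_nonneg
          (fun q hq => mul_nonneg (hwt0 q hq) (by linarith [hπsge q hq]))).1 hsum0 q hq
        rcases mul_eq_zero.1 hterm with h' | h'
        · exact h'
        · exact absurd (by linarith : ⟪πs, q⟫ = 1) hne1
      have hsumT : ∑ q ∈ T, wt q = 1 := by
        rw [Finset.sum_subset (Finset.filter_subset _ _) hwz]
        exact hwt1
      have husumT : ∑ q ∈ T, wt q • q = t₁ • w := by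
        rw [Finset.sum_subset (Finset.filter_subset _ _)
          (fun q hq hnq => by rw [hwz q hq hnq, zero_smul])]
        exact husum
      -- inner of f T with u is 1
      have hπTu : ⟪f T, t₁ • w⟫ = 1 := by
        rw [← husumT, inner_sum]
        have : ∀ q ∈ T, ⟪f T, wt q • q⟫ = wt q := by
          intro q hq
          rw [real_inner_smul_right, hπTeq q hq, mul_one]
        rw [Finset.sum_congr rfl this, hsumT]
      have hπTw : t₁ * ⟪f T, w⟫ = 1 := by
        rw [← hπTu, real_inner_smul_right]
      -- z satisfies the cut
      have hzcut : 1 ≤ ⟪f T, θ • w⟫ := by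
        have h9 := Set.mem_iInter₂.1 hzF (f T) hπTF
        rw [hhs] at h9
        have h9' : 1 ≤ ⟪f T, (1 - θ) • (0 : EuclideanSpace ℝ (Fin p)) + θ • w⟫ := h9
        rwa [smul_zero, zero_add] at h9'
      have hθw : ⟪f T, θ • w⟫ = θ * ⟪f T, w⟫ := real_inner_smul_right _ _ _
      have hθt₁ : t₁ ≤ θ := by
        have hw1 : ⟪f T, w⟫ = 1 / t₁ := by
          rw [eq_div_iff ht₁pos.ne']
          linarith [hπTw, mul_comm t₁ ⟪f T, w⟫]
        rw [hθw, hw1] at hzcut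
        have h2 := mul_le_mul_of_nonneg_right hzcut ht₁0
        rw [one_mul] at h2
        have h3 : θ * (1/t₁) * t₁ = θ := by field_simp
        linarith
      -- conclude θ • w ∈ K
      apply hzmem
      by_cases ht₁e : t₁ = 1
      · have hθ1 : θ = 1 := le_antisymm hθ.2 (ht₁e ▸ hθt₁)
        rw [hθ1, one_smul]
        exact hwK
      · have ht₁lt : t₁ < 1 := lt_of_le_of_ne ht₁1 ht₁e
        set c : ℝ := (θ - t₁) / (1 - t₁) with hc
        have hc0 : 0 ≤ c := div_nonneg (by linarith) (by linarith)
        have hc1 : c ≤ 1 := by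
          rw [div_le_one (by linarith)]
          linarith [hθ.2]
        have hcomb := (convex_convexHull ℝ (A : Set (EuclideanSpace ℝ (Fin p)))) huK hwK
          (by linarith : (0:ℝ) ≤ 1 - c) hc0 (by ring)
        have heq : (1 - c) • (t₁ • w) + c • w = θ • w := by
          rw [smul_smul, ← add_smul]
          congr 1
          rw [hc]
          have hne : (1:ℝ) - t₁ ≠ 0 := by linarith
          field_simp [hne]
          ring
        rwa [heq] at hcomb
  exact key2


theorem statement0 (p : ℕ) (hp : 1 ≤ p) (Q : Set (Fin p → ℝ))
    (hQbin : Q ⊆ {z | ∀ i, z i = 0 ∨ z i = 1})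
    (hQne : Q.Nonempty) (hQfin : Q.Finite) :
    ∃ F : Finset (Fin p → ℝ),
      convexHull ℝ (Q \ {0}) =
        convexHull ℝ Q ∩ ⋂ π ∈ F, {z : Fin p → ℝ | 1 ≤ ∑ i, π i * z i} := by
  classical
  set e : EuclideanSpace ℝ (Fin p) ≃ₗ[ℝ] (Fin p → ℝ) := WithLp.linearEquiv 2 ℝ (Fin p → ℝ) with he
  have hmem : ∀ (S : Set (Fin p → ℝ)) (x : EuclideanSpace ℝ (Fin p)),
      e x ∈ convexHull ℝ S ↔ x ∈ convexHull ℝ (e ⁻¹' S) := by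
    intro S x
    rw [← e.injective.mem_set_image]
    have h1 := LinearMap.image_convexHull (e : EuclideanSpace ℝ (Fin p) →ₗ[ℝ] (Fin p → ℝ)) (e ⁻¹' S)
    simp only [LinearEquiv.coe_coe] at h1
    rw [h1, Set.image_preimage_eq S e.surjective]
  obtain ⟨F', hF'⟩ := statement0_euc p hp (e ⁻¹' Q) (fun z hz => hQbin hz)
    (by obtain ⟨x, hx⟩ := hQne; exact ⟨e.symm x, by simpa using hx⟩)
    (hQfin.preimage e.injective.injOn)
  refine ⟨F'.image e, ?_⟩
  ext z
  obtain ⟨x, rfl⟩ := e.surjective z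
  have key := congrArg (x ∈ ·) hF'
  simp only [eq_iff_iff] at key
  have hd : e ⁻¹' (Q \ {0}) = e ⁻¹' Q \ {0} := by
    ext y; simp
  rw [Set.mem_inter_iff, hmem, hmem, hd, key, Set.mem_inter_iff]
  simp [Finset.mem_image, he]

end Statement0
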